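/- Assume n > 2 and m ≥ 3. No N-scoring rule whose scores satisfy s_{m−1} < s_m (i.e. k* = m − 1) is regret-free truth-telling. -/

import Mathlib

open Function

/-- A preference: a bijection from positions (`0` = bottom/worst, `m-1` = top/best)
to alternatives.  `p k` is the alternative in the `(k+1)`-th position from the bottom. -/
abbrev Pref (m : ℕ) := Equiv.Perm (Fin m)

/-- A profile: one preference for each of the `n` agents. -/
abbrev Profile (n m : ℕ) := Fin n → Pref m

/-- `x` is strictly preferred to `y` under `p`. -/
def prefers {m : ℕ} (p : Pref m) (x y : Fin m) : Prop :=
  p.symm y < p.symm x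

instance {m : ℕ} (p : Pref m) (x y : Fin m) : Decidable (prefers p x y) :=
  inferInstanceAs (Decidable (p.symm y < p.symm x))

/-- `x` is the top (best) alternative of `p`. -/
def IsBest {m : ℕ} (p : Pref m) (x : Fin m) : Prop :=
  ∀ y, p.symm y ≤ p.symm x

instance {m : ℕ} (p : Pref m) (x : Fin m) : Decidable (IsBest p x) :=
  inferInstanceAs (Decidable (∀ y, p.symm y ≤ p.symm x))

/-- Regret-free truth-telling: whenever a misreport `Pi'` by agent `i` yields a strictly
better outcome, there is a subprofile of the others (a full profile `Pstar` agreeing with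
`P` at `i`) consistent with the observed outcome at which the misreport does strictly worse. -/
def RFTT {n m : ℕ} (f : Profile n m → Fin m) : Prop :=
  ∀ (i : Fin n) (P : Profile n m) (Pi' : Pref m),
    prefers (P i) (f (update P i Pi')) (f P) →
    ∃ Pstar : Profile n m, Pstar i = P i ∧ f Pstar = f P ∧
      prefers (P i) (f Pstar) (f (update Pstar i Pi'))

/-- Strategy-proofness: truth-telling yields a weakly better outcome. -/
def StrategyProof {n m : ℕ} (f : Profile n m → Fin m) : Prop :=
  ∀ (P : Profile n m) (i : Fin n) (Pi' : Pref m),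
    f P = f (update P i Pi') ∨ prefers (P i) (f P) (f (update P i Pi'))

/-- Tops-only: the outcome only depends on the agents' top alternatives. -/
def TopsOnly {n m : ℕ} (f : Profile n m → Fin m) : Prop :=
  ∀ P P' : Profile n m, (∀ i x, IsBest (P i) x ↔ IsBest (P' i) x) → f P = f P'

/-- Efficiency: no alternative is strictly preferred to the outcome by every agent. -/
def Efficient {n m : ℕ} (f : Profile n m → Fin m) : Prop :=
  ∀ P : Profile n m, ¬ ∃ y, ∀ i, prefers (P i) y (f P)

/-- Dictatorship: some agent always gets his top alternative. -/
def Dictatorial {n m : ℕ} (f : Profile n m → Fin m) : Prop :=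
  ∃ i : Fin n, ∀ P : Profile n m, IsBest (P i) (f P)

/-- Anonymity: invariance under permutations of the agents. -/
def Anonymous {n m : ℕ} (f : Profile n m → Fin m) : Prop :=
  ∀ (P : Profile n m) (σ : Equiv.Perm (Fin n)), f P = f (fun i => P (σ i))

/-- Neutrality: relabelling the alternatives relabels the outcome accordingly. -/
def Neutral {n m : ℕ} (f : Profile n m → Fin m) : Prop :=
  ∀ (P : Profile n m) (π : Equiv.Perm (Fin m)),
    π (f P) = f (fun i => (P i).trans π)

/-- The minimal position (`0`-indexed, from the bottom) of alternative `x` in profile `P`. -/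
noncomputable def minpos {n m : ℕ} (P : Profile n m) (x : Fin m) : ℕ :=
  ⨅ i : Fin n, ((P i).symm x : ℕ)

/-- The maxmin winners of profile `P`. -/
def MaxminSet {n m : ℕ} (P : Profile n m) : Set (Fin m) :=
  {x | ∀ y, minpos P y ≤ minpos P x}

/-- An `A`-maxmin rule: breaks ties among maxmin winners by a fixed strict linear order. -/
def AMaxmin {n m : ℕ} (f : Profile n m → Fin m) : Prop :=
  ∃ r : Fin m → Fin m → Prop, IsStrictTotalOrder (Fin m) r ∧
    ∀ P : Profile n m, f P ∈ MaxminSet P ∧ ∀ y ∈ MaxminSet P, y ≠ f P → r (f P) y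

/-- An `N`-maxmin rule: breaks ties among maxmin winners by a fixed agent's preference. -/
def NMaxmin {n m : ℕ} (f : Profile n m → Fin m) : Prop :=
  ∃ i : Fin n, ∀ P : Profile n m,
    f P ∈ MaxminSet P ∧ ∀ y ∈ MaxminSet P, y ≠ f P → prefers (P i) (f P) y

/-- The score of alternative `x` in profile `P`, for scores `s` (indexed by position
from the bottom). -/
noncomputable def score {n m : ℕ} (s : Fin m → ℝ) (P : Profile n m) (x : Fin m) : ℝ :=
  ∑ i : Fin n, s ((P i).symm x)

/-- The scoring winners of profile `P`. -/
def ScoreSet {n m : ℕ} (s : Fin m → ℝ) (P : Profile n m) : Set (Fin m) :=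
  {x | ∀ y, score s P y ≤ score s P x}

/-- An `A`-scoring rule: breaks ties among scoring winners by a fixed strict linear order. -/
def AScoring {n m : ℕ} (s : Fin m → ℝ) (f : Profile n m → Fin m) : Prop :=
  ∃ r : Fin m → Fin m → Prop, IsStrictTotalOrder (Fin m) r ∧
    ∀ P : Profile n m, f P ∈ ScoreSet s P ∧ ∀ y ∈ ScoreSet s P, y ≠ f P → r (f P) y

/-- An `N`-scoring rule: breaks ties among scoring winners by a fixed agent's preference. -/
def NScoring {n m : ℕ} (s : Fin m → ℝ) (f : Profile n m → Fin m) : Prop :=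
  ∃ i : Fin n, ∀ P : Profile n m,
    f P ∈ ScoreSet s P ∧ ∀ y ∈ ScoreSet s P, y ≠ f P → prefers (P i) (f P) y

/-- The number of agents preferring `a` to `b` in profile `P`. -/
def numPref {n m : ℕ} (P : Profile n m) (a b : Fin m) : ℕ :=
  (Finset.univ.filter fun i => prefers (P i) a b).card

/-- `a` is a Condorcet winner at `P`. -/
def CondorcetWinner {n m : ℕ} (P : Profile n m) (a : Fin m) : Prop :=
  ∀ b, b ≠ a → numPref P b a < numPref P a b

/-- Condorcet consistency: the rule picks the Condorcet winner whenever one exists. -/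
def CondorcetConsistent {n m : ℕ} (f : Profile n m → Fin m) : Prop :=
  ∀ (P : Profile n m) (a : Fin m), CondorcetWinner P a → f P = a

/-- `p'` is a monotonic transformation of `p` with respect to `a`: all positions up to
(and including) the position of `a` are unchanged. -/
def MonoTransf {m : ℕ} (p p' : Pref m) (a : Fin m) : Prop :=
  ∀ k : Fin m, k ≤ p.symm a → p k = p' k

/-- Monotonicity: an alternative ranked below the outcome by agent `i` cannot become
the outcome after a monotonic transformation of `i`'s preference w.r.t. the outcome. -/
def MonotoneRule {n m : ℕ} (f : Profile n m → Fin m) : Prop :=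
  ∀ (P : Profile n m) (i : Fin n) (b : Fin m), prefers (P i) (f P) b →
    ∀ Pi' : Pref m, MonoTransf (P i) Pi' (f P) → f (update P i Pi') ≠ b

/-- One pairwise majority contest: the challenger `y` beats the incumbent `c` only if
strictly more agents prefer `y` to `c` (ties go to the incumbent, who always comes
earlier in the fixed order). -/
def duel {n m : ℕ} (P : Profile n m) (c y : Fin m) : Fin m :=
  if numPref P c y < numPref P y c then y else c

/-- Run successive pairwise contests starting from incumbent `c` against the listed
challengers in order. -/
def seRun {n m : ℕ} (P : Profile n m) : Fin m → List (Fin m) → Fin m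
  | c, [] => c
  | c, y :: rest => seRun P (duel P c y) rest

/-- The survivor of successive elimination along a list of alternatives (none if empty). -/
def seWinner? {n m : ℕ} (P : Profile n m) : List (Fin m) → Option (Fin m)
  | [] => none
  | c :: rest => some (seRun P c rest)

/-- A successive elimination rule: there is an enumeration `e 0 ≻ e 1 ≻ ⋯ ≻ e (m-1)` of the
alternatives such that the rule outputs the survivor of the sequential pairwise majority
contests (ties resolved in favour of the `≻`-greater, i.e. earlier, alternative). -/
def SuccElim {n m : ℕ} (f : Profile n m → Fin m) : Prop :=
  ∃ e : Fin m ≃ Fin m, ∀ P : Profile n m,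
    seWinner? P ((List.finRange m).map e) = some (f P)


namespace Stmt9
open Finset

lemma psum (x y : ℝ) : ∀ N : ℕ, (∑ k ∈ Finset.range N, if k % 2 = 0 then x else y)
    = ((N+1)/2 : ℕ) * x + ((N/2 : ℕ)) * y := by
  intro N
  induction N with
  | zero => simp
  | succ N ih =>
    rw [Finset.sum_range_succ, ih]
    by_cases hN : N % 2 = 0
    · have h1 : (N+1+1)/2 = (N+1)/2 + 1 := by omega
      have h2 : (N+1)/2 = N/2 := by omega
      simp only [hN, if_pos rfl, h1, h2]
      push_cast
      ring
    · have h1 : (N+1+1)/2 = (N+1)/2 := by omega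
      have h2 : (N+1)/2 = N/2 + 1 := by omega
      simp only [hN, if_neg hN, h1, h2]
      push_cast
      ring

lemma score_update {n m : ℕ} (s : Fin m → ℝ) (P : Profile n m) (i : Fin n) (q : Pref m)
    (x : Fin m) :
    score s (update P i q) x = score s P x - s ((P i).symm x) + s (q.symm x) := by
  classical
  have hfun : (fun k => s (((update P i q) k).symm x))
      = Function.update (fun k => s ((P k).symm x)) i (s (q.symm x)) := by
    funext k
    by_cases h : k = i
    · subst h; simp
    · simp [h]
  unfold score
  rw [hfun, Finset.sum_update_of_mem (Finset.mem_univ i),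
    Finset.sdiff_singleton_eq_erase,
    ← Finset.sum_erase_add Finset.univ _ (Finset.mem_univ i)]
  ring

lemma score_conj {n m : ℕ} (s : Fin m → ℝ) (Q : Profile n m) (σ : Equiv.Perm (Fin n))
    (x : Fin m) : score s (fun k => Q (σ k)) x = score s Q x := by
  unfold score
  exact Equiv.sum_comp σ (fun k => s ((Q k).symm x))

lemma score4 {n m : ℕ} (hn : 3 ≤ n) (s : Fin m → ℝ) (q0 qA qB ql : Pref m) (x : Fin m) :
    score s (fun k : Fin n => if k.val = 0 then q0 else if k.val = n-1 then ql
      else if k.val % 2 = 1 then qA else qB) x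
    = s (q0.symm x) + s (ql.symm x) + (((n-1)/2 : ℕ) : ℝ) * s (qA.symm x)
      + (((n-2)/2 : ℕ) : ℝ) * s (qB.symm x) := by
  obtain ⟨N, rfl⟩ : ∃ N, n = N + 3 := ⟨n - 3, by omega⟩
  have key : score s (fun k : Fin (N+3) => if k.val = 0 then q0 else if k.val = N+3-1 then ql
      else if k.val % 2 = 1 then qA else qB) x
      = ∑ j ∈ Finset.range (N+3), (if j = 0 then s (q0.symm x) else if j = N+2 then s (ql.symm x)
        else if j % 2 = 1 then s (qA.symm x) else s (qB.symm x)) := by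
    unfold score
    rw [← Fin.sum_univ_eq_sum_range (fun j => if j = 0 then s (q0.symm x)
      else if j = N+2 then s (ql.symm x)
      else if j % 2 = 1 then s (qA.symm x) else s (qB.symm x)) (N+3)]
    apply Finset.sum_congr rfl
    intro i _
    have h3 : N + 3 - 1 = N + 2 := by omega
    by_cases h0 : (i : ℕ) = 0
    · simp [h0]
    · by_cases h1 : (i : ℕ) = N + 2
      · simp [h0, h1, h3]
      · by_cases h2 : (i : ℕ) % 2 = 1 <;> simp [h0, h1, h2, h3]
  rw [key, Finset.sum_range_succ, Finset.sum_range_succ']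
  have e2 : ∀ i ∈ Finset.range (N+1),
      (if i+1 = 0 then s (q0.symm x) else if i+1 = N+2 then s (ql.symm x)
        else if (i+1) % 2 = 1 then s (qA.symm x) else s (qB.symm x))
      = (if i % 2 = 0 then s (qA.symm x) else s (qB.symm x)) := by
    intro i hi
    simp only [Finset.mem_range] at hi
    have ha : i + 1 ≠ 0 := by omega
    have hb : i + 1 ≠ N + 2 := by omega
    by_cases hp : i % 2 = 0
    · have hc : (i+1) % 2 = 1 := by omega
      simp [ha, hb, hc, hp, show i ≠ N + 1 by omega]
    · have hc : ¬((i+1) % 2 = 1) := by omega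
      simp [ha, hb, hc, hp, show i ≠ N + 1 by omega]
  rw [Finset.sum_congr rfl e2, psum]
  have c1 : N+3-1 = N+2 := by omega
  have c2 : N+3-2 = N+1 := by omega
  have c3 : N+1+1 = N+2 := by omega
  rw [c1, c2, c3]
  simp
  ring

lemma scoreB {n m : ℕ} (hn : 3 ≤ n) (s : Fin m → ℝ) (q0 q1 qE qO : Pref m) (x : Fin m) :
    score s (fun k : Fin n => if k.val = 0 then q0 else if k.val = 1 then q1
      else if k.val % 2 = 0 then qE else qO) x
    = s (q0.symm x) + s (q1.symm x) + (((n-1)/2 : ℕ) : ℝ) * s (qE.symm x)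
      + (((n-2)/2 : ℕ) : ℝ) * s (qO.symm x) := by
  obtain ⟨N, rfl⟩ : ∃ N, n = N + 3 := ⟨n - 3, by omega⟩
  have key : score s (fun k : Fin (N+3) => if k.val = 0 then q0 else if k.val = 1 then q1
      else if k.val % 2 = 0 then qE else qO) x
      = ∑ j ∈ Finset.range (N+3), (if j = 0 then s (q0.symm x) else if j = 1 then s (q1.symm x)
        else if j % 2 = 0 then s (qE.symm x) else s (qO.symm x)) := by
    unfold score
    rw [← Fin.sum_univ_eq_sum_range (fun j => if j = 0 then s (q0.symm x)
      else if j = 1 then s (q1.symm x)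
      else if j % 2 = 0 then s (qE.symm x) else s (qO.symm x)) (N+3)]
    apply Finset.sum_congr rfl
    intro i _
    by_cases h0 : (i : ℕ) = 0
    · simp [h0]
    · by_cases h1 : (i : ℕ) = 1
      · simp [h0, h1]
      · by_cases h2 : (i : ℕ) % 2 = 0 <;> simp [h0, h1, h2]
  rw [key, Finset.sum_range_succ', Finset.sum_range_succ']
  have e2 : ∀ i ∈ Finset.range (N+1),
      (if i+1+1 = 0 then s (q0.symm x) else if i+1+1 = 1 then s (q1.symm x)
        else if (i+1+1) % 2 = 0 then s (qE.symm x) else s (qO.symm x))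
      = (if i % 2 = 0 then s (qE.symm x) else s (qO.symm x)) := by
    intro i hi
    have ha : i + 1 + 1 ≠ 0 := by omega
    have hb : i + 1 + 1 ≠ 1 := by omega
    by_cases hp : i % 2 = 0
    · have hc : (i+1+1) % 2 = 0 := by omega
      simp [ha, hb, hc, hp]
    · have hc : ¬((i+1+1) % 2 = 0) := by omega
      simp [ha, hb, hc, hp]
  rw [Finset.sum_congr rfl e2, psum]
  have c1 : N+3-1 = N+2 := by omega
  have c2 : N+3-2 = N+1 := by omega
  have c3 : N+1+1 = N+2 := by omega
  rw [c1, c2, c3]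
  simp
  ring

section Engine

variable {n m : ℕ} {s : Fin m → ℝ} {f : Profile n m → Fin m} {i₀ : Fin n}

lemma winner_eq
    (hspec : ∀ P : Profile n m, f P ∈ ScoreSet s P ∧
      ∀ y ∈ ScoreSet s P, y ≠ f P → prefers (P i₀) (f P) y)
    (P : Profile n m) (w : Fin m)
    (hmax : ∀ y, score s P y ≤ score s P w)
    (htie : ∀ y, score s P w ≤ score s P y → y ≠ w → prefers (P i₀) w y) :
    f P = w := by
  by_contra hne
  have h1 := (hspec P).1
  simp only [ScoreSet, Set.mem_setOf_eq] at h1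
  have h3 : prefers (P i₀) w (f P) := htie _ (h1 w) hne
  have h4 : prefers (P i₀) (f P) w := by
    refine (hspec P).2 w ?_ (fun h => hne h.symm)
    simp only [ScoreSet, Set.mem_setOf_eq]
    exact hmax
  unfold prefers at h3 h4
  exact lt_asymm h3 h4

lemma bottom_attack (hR : RFTT f) (i : Fin n) (P : Profile n m) (Pi' : Pref m)
    (hbot : (((P i).symm (f P)) : ℕ) = 0)
    (hne : f (update P i Pi') ≠ f P) : False := by
  have hpref : prefers (P i) (f (update P i Pi')) (f P) := by
    unfold prefers
    have hne' : (((P i).symm (f (update P i Pi'))) : ℕ) ≠ 0 := by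
      intro h
      exact hne ((P i).symm.injective (Fin.ext (h.trans hbot.symm)))
    rw [Fin.lt_iff_val_lt_val]
    omega
  obtain ⟨Ps, h1, h2, h3⟩ := hR i P Pi' hpref
  unfold prefers at h3
  rw [h2, Fin.lt_iff_val_lt_val, hbot] at h3
  omega

lemma c2_attack (hm : 3 ≤ m)
    (hspec : ∀ P : Profile n m, f P ∈ ScoreSet s P ∧
      ∀ y ∈ ScoreSet s P, y ≠ f P → prefers (P i₀) (f P) y)
    (A B C : Fin m) (hAv : (A : ℕ) = m-1) (hBv : (B : ℕ) = m-2) (hCv : (C : ℕ) = m-3)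
    (hδ : s B < s A)
    (Q : Profile n m) (hQ : Q i₀ = 1)
    (hcb : score s Q C = score s Q B + (s A - s B))
    (hca : score s Q A < score s Q C)
    (hoth : ∀ x : Fin m, (x : ℕ) < m-3 → score s Q x ≤ score s Q C) :
    ¬ RFTT f := by
  intro hR
  have hAB : A ≠ B := fun h => by have := congrArg Fin.val h; omega
  have hAC : A ≠ C := fun h => by have := congrArg Fin.val h; omega
  have hBC : B ≠ C := fun h => by have := congrArg Fin.val h; omega
  set sw : Pref m := Equiv.swap A B with hsw
  have hswA : sw A = B := Equiv.swap_apply_left A B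
  have hswB : sw B = A := Equiv.swap_apply_right A B
  have hswC : sw C = C := Equiv.swap_apply_of_ne_of_ne (Ne.symm hAC) (Ne.symm hBC)
  have hswx : ∀ x : Fin m, (x : ℕ) < m-3 → sw x = x := fun x hx =>
    Equiv.swap_apply_of_ne_of_ne (fun h => by have := congrArg Fin.val h; omega)
      (fun h => by have := congrArg Fin.val h; omega)
  have hswsymm : sw.symm = sw := Equiv.symm_swap A B
  have hone : ∀ y : Fin m, (1 : Pref m).symm y = y := fun y => rfl
  have cases4 : ∀ y : Fin m, y = A ∨ y = B ∨ y = C ∨ (y : ℕ) < m-3 := by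
    intro y
    have hy := y.isLt
    by_cases h1 : (y : ℕ) = m-1
    · exact Or.inl (Fin.ext (by omega))
    by_cases h2 : (y : ℕ) = m-2
    · exact Or.inr (Or.inl (Fin.ext (by omega)))
    by_cases h3 : (y : ℕ) = m-3
    · exact Or.inr (Or.inr (Or.inl (Fin.ext (by omega))))
    · exact Or.inr (Or.inr (Or.inr (by omega)))
  -- score change under the misreport
  have hupd : ∀ (Ps : Profile n m), Ps i₀ = 1 →
      ∀ x, score s (update Ps i₀ sw) x = score s Ps x - s x + s (sw x) := by
    intro Ps hPs x
    rw [score_update, hPs]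
    simp [hswsymm, hone]
  -- outcome at Q is C
  have fQ : f Q = C := by
    refine winner_eq hspec Q C ?_ ?_
    · intro y
      rcases cases4 y with h | h | h | h
      · rw [h]; linarith
      · rw [h]; linarith
      · rw [h]
      · exact hoth y h
    · intro y hy hne
      rcases cases4 y with h | h | h | h
      · exfalso; rw [h] at hy; linarith
      · exfalso; rw [h] at hy; linarith
      · exact absurd h hne
      · unfold prefers
        rw [hQ]
        rw [hone, hone, Fin.lt_iff_val_lt_val]
        omega
  -- outcome after the misreport at Q is B
  have fupd : f (update Q i₀ sw) = B := by
    refine winner_eq hspec _ B ?_ ?_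
    · intro y
      have hB' : score s (update Q i₀ sw) B = score s Q C := by
        rw [hupd Q hQ, hswB, hcb]; ring
      rcases cases4 y with h | h | h | h
      · rw [h, hupd Q hQ, hswA, hB']; linarith
      · rw [h, hB']
      · rw [h, hupd Q hQ, hswC, hB']; linarith
      · rw [hupd Q hQ, hswx y h, hB']
        have := hoth y h
        linarith
    · intro y _ hne
      unfold prefers
      have hui : update Q i₀ sw i₀ = sw := update_self i₀ sw Q
      rw [hui, hswsymm]
      have h1 : sw y ≠ A := by
        intro h
        exact hne (sw.injective (h.trans hswB.symm))
      have h2 := (sw y).isLt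
      rw [hswB, Fin.lt_iff_val_lt_val]
      have h3 : ((sw y : Fin m) : ℕ) ≠ m - 1 := fun h => h1 (Fin.ext (by omega))
      omega
  -- the manipulation is profitable
  have hbc : prefers (Q i₀) (f (update Q i₀ sw)) (f Q) := by
    rw [fupd, fQ, hQ]
    unfold prefers
    rw [hone, hone, Fin.lt_iff_val_lt_val]
    omega
  obtain ⟨Ps, hs1, hs2, hs3⟩ := hR i₀ Q sw hbc
  have hPs1 : Ps i₀ = 1 := hs1.trans hQ
  rw [hs2] at hs3
  rw [fQ, hQ] at hs3
  unfold prefers at hs3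
  rw [hone, hone, Fin.lt_iff_val_lt_val, hCv] at hs3
  -- hs3 : (f (update Ps i₀ sw)).val < m - 3
  set R : Profile n m := update Ps i₀ sw with hRdef
  set y₀ : Fin m := f R with hy₀
  have hy0A : y₀ ≠ A := fun h => by have := congrArg Fin.val h; omega
  have hy0B : y₀ ≠ B := fun h => by have := congrArg Fin.val h; omega
  have hy0C : y₀ ≠ C := fun h => by have := congrArg Fin.val h; omega
  have hswy0 : sw y₀ = y₀ := hswx y₀ hs3
  have hSSPs : ∀ z, score s Ps z ≤ score s Ps C := by
    have h := (hspec Ps).1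
    simp only [ScoreSet, Set.mem_setOf_eq] at h
    rw [hs2, fQ] at h
    exact h
  have hSSR : ∀ z, score s R z ≤ score s R y₀ := by
    have h := (hspec R).1
    simp only [ScoreSet, Set.mem_setOf_eq] at h
    exact h
  have hkey : score s R y₀ ≤ score s R C := by
    rw [hupd Ps hPs1 y₀, hupd Ps hPs1 C, hswy0, hswC]
    have := hSSPs y₀
    linarith
  have hCR : C ∈ ScoreSet s R := by
    simp only [ScoreSet, Set.mem_setOf_eq]
    intro z
    exact le_trans (hSSR z) hkey
  have htb := (hspec R).2 C hCR (fun h => hy0C (h.symm))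
  unfold prefers at htb
  have hui : R i₀ = sw := update_self i₀ sw Ps
  rw [hui, hswsymm, hswC, hswy0, Fin.lt_iff_val_lt_val, hCv] at htb
  omega

end Engine

lemma score3 {n m : ℕ} (hn : n = 3) (s : Fin m → ℝ) (q0 q1 q2 : Pref m) (x : Fin m) :
    score s (fun k : Fin n => if (k:ℕ) = 0 then q0 else if (k:ℕ) = 1 then q1 else q2) x
    = s (q0.symm x) + s (q1.symm x) + s (q2.symm x) := by
  subst hn
  unfold score
  rw [Fin.sum_univ_three]
  norm_num


set_option maxHeartbeats 1000000 in
lemma branchA {n m : ℕ} (hn : 2 < n) (hm : 3 ≤ m) (s : Fin m → ℝ)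
    (hmono : Monotone s) {f : Profile n m → Fin m} {i₀ : Fin n}
    (hspec : ∀ P : Profile n m, f P ∈ ScoreSet s P ∧
      ∀ y ∈ ScoreSet s P, y ≠ f P → prefers (P i₀) (f P) y)
    (hR : RFTT f)
    (A B C Z : Fin m) (hAv : (A:ℕ) = m-1) (hBv : (B:ℕ) = m-2)
    (hCv : (C:ℕ) = m-3) (hZv : (Z:ℕ) = 0)
    (hsZA : s Z < s A) (hsBA : s B < s A)
    (hpar : n % 2 = 0) : False := by
  obtain ⟨z0, hz0⟩ : ∃ z : Fin n, (z:ℕ) = 0 := ⟨⟨0, by omega⟩, rfl⟩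
  obtain ⟨z1, hz1⟩ : ∃ z : Fin n, (z:ℕ) = 1 := ⟨⟨1, by omega⟩, rfl⟩
  have hne : ∀ (u v : Fin m), (u:ℕ) ≠ (v:ℕ) → u ≠ v :=
    fun u v h hc => h (congrArg Fin.val hc)
  have hmono' : ∀ u v : Fin m, (u:ℕ) ≤ (v:ℕ) → s u ≤ s v :=
    fun u v h => hmono h
  have hZB : s Z ≤ s B := hmono' Z B (by omega)
  have hZC : s Z ≤ s C := hmono' Z C (by omega)
  have hCB : s C ≤ s B := hmono' C B (by omega)
  have hone : ∀ y : Fin m, (1 : Pref m).symm y = y := fun y => rfl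
  set σ : Equiv.Perm (Fin n) := Equiv.swap z0 i₀ with hσdef
  have hσ0 : σ i₀ = z0 := Equiv.swap_apply_right _ _
  have hσσ1 : σ (σ z1) = z1 := Equiv.swap_apply_self _ _ _
  have hAB : A ≠ B := hne _ _ (by omega)
  have hAC : A ≠ C := hne _ _ (by omega)
  have hAZ : A ≠ Z := hne _ _ (by omega)
  have hBC : B ≠ C := hne _ _ (by omega)
  have hBZ : B ≠ Z := hne _ _ (by omega)
  set πa : Equiv.Perm (Fin m) := (Equiv.swap A C).trans (Equiv.swap C Z) with hπa
  set πb : Equiv.Perm (Fin m) :=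
    (Equiv.swap A B).trans ((Equiv.swap B C).trans (Equiv.swap C Z)) with hπb
  set πl : Equiv.Perm (Fin m) := (Equiv.swap A B).trans (Equiv.swap A C) with hπl
  have hπaA : πa A = Z := by
    rw [hπa]
    simp only [Equiv.trans_apply, Equiv.swap_apply_left]
  have hπaB : πa B = B := by
    rw [hπa]
    simp only [Equiv.trans_apply]
    rw [Equiv.swap_apply_of_ne_of_ne (Ne.symm hAB) hBC,
      Equiv.swap_apply_of_ne_of_ne hBC hBZ]
  have hπaC : πa C = A := by
    rw [hπa]
    simp only [Equiv.trans_apply, Equiv.swap_apply_right]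
    rw [Equiv.swap_apply_of_ne_of_ne hAC hAZ]
  have hπbA : πb A = Z := by
    rw [hπb]
    simp only [Equiv.trans_apply, Equiv.swap_apply_left]
  have hπbB : πb B = A := by
    rw [hπb]
    simp only [Equiv.trans_apply, Equiv.swap_apply_right]
    rw [Equiv.swap_apply_of_ne_of_ne hAB hAC, Equiv.swap_apply_of_ne_of_ne hAC hAZ]
  have hπbC : πb C = B := by
    rw [hπb]
    simp only [Equiv.trans_apply]
    rw [Equiv.swap_apply_of_ne_of_ne (Ne.symm hAC) (Ne.symm hBC),
      Equiv.swap_apply_right, Equiv.swap_apply_of_ne_of_ne hBC hBZ]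
  have hπlA : πl A = B := by
    rw [hπl]
    simp only [Equiv.trans_apply, Equiv.swap_apply_left]
    rw [Equiv.swap_apply_of_ne_of_ne (Ne.symm hAB) hBC]
  have hπlB : πl B = C := by
    rw [hπl]
    simp only [Equiv.trans_apply, Equiv.swap_apply_right, Equiv.swap_apply_left]
  have hπlC : πl C = A := by
    rw [hπl]
    simp only [Equiv.trans_apply]
    rw [Equiv.swap_apply_of_ne_of_ne (Ne.symm hAC) (Ne.symm hBC), Equiv.swap_apply_right]
  have hn3 : 3 ≤ n := by omega
  set Qc : Profile n m := fun k => if (k:ℕ) = 0 then 1 else if (k:ℕ) = n-1 then πl.symm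
    else if (k:ℕ) % 2 = 1 then πa.symm else πb.symm with hQc
  set Q : Profile n m := fun k => Qc (σ k) with hQdef
  have hQ : Q i₀ = 1 := by
    show Qc (σ i₀) = 1
    rw [hσ0, hQc]
    simp [hz0]
  have hsc : ∀ x, score s Q x
      = s x + s (πl x) + (((n-1)/2 : ℕ) : ℝ) * s (πa x) + (((n-2)/2 : ℕ) : ℝ) * s (πb x) := by
    intro x
    rw [hQdef, Stmt9.score_conj s Qc σ x, hQc,
      Stmt9.score4 hn3 s 1 πa.symm πb.symm πl.symm x]
    simp [hone]
  have hOE : ((n-1)/2 : ℕ) = ((n-2)/2 : ℕ) := by omega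
  have hE1 : 1 ≤ ((n-2)/2 : ℕ) := by omega
  have hOEr : (((n-1)/2 : ℕ) : ℝ) = (((n-2)/2 : ℕ) : ℝ) := by exact_mod_cast hOE
  have hE1r : (1:ℝ) ≤ (((n-2)/2 : ℕ) : ℝ) := by exact_mod_cast hE1
  have hEnn : (0:ℝ) ≤ (((n-2)/2 : ℕ) : ℝ) := by positivity
  have hA1 : score s Q A
      = s A + s B + (((n-1)/2:ℕ):ℝ) * s Z + (((n-2)/2:ℕ):ℝ) * s Z := by
    rw [hsc A, hπlA, hπaA, hπbA]
  have hB1 : score s Q B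
      = s B + s C + (((n-1)/2:ℕ):ℝ) * s B + (((n-2)/2:ℕ):ℝ) * s A := by
    rw [hsc B, hπlB, hπaB, hπbB]
  have hC1 : score s Q C
      = s C + s A + (((n-1)/2:ℕ):ℝ) * s A + (((n-2)/2:ℕ):ℝ) * s B := by
    rw [hsc C, hπlC, hπaC, hπbC]
  have hcb : score s Q C = score s Q B + (s A - s B) := by
    rw [hB1, hC1, hOEr]
    ring
  have hca : score s Q A < score s Q C := by
    rw [hA1, hC1, hOEr]
    have pE : (s B - s Z) ≤ (((n-2)/2:ℕ):ℝ) * (s B - s Z) :=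
      le_mul_of_one_le_left (by linarith) hE1r
    have pO : (s A - s Z) ≤ (((n-2)/2:ℕ):ℝ) * (s A - s Z) :=
      le_mul_of_one_le_left (by linarith) hE1r
    nlinarith [pE, pO]
  have hoth : ∀ x : Fin m, (x:ℕ) < m-3 → score s Q x ≤ score s Q C := by
    intro x hx
    have hCZ : C ≠ Z := hne _ _ (by omega)
    have hxA : x ≠ A := hne _ _ (by omega)
    have hxB : x ≠ B := hne _ _ (by omega)
    have hxC : x ≠ C := hne _ _ (by omega)
    rw [hC1, hOEr]
    by_cases hxZ : x = Z
    · subst hxZ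
      have hπaZ : πa x = C := by
        rw [hπa]
        simp only [Equiv.trans_apply]
        rw [Equiv.swap_apply_of_ne_of_ne (Ne.symm hAZ) (Ne.symm hCZ),
          Equiv.swap_apply_right]
      have hπbZ : πb x = C := by
        rw [hπb]
        simp only [Equiv.trans_apply]
        rw [Equiv.swap_apply_of_ne_of_ne (Ne.symm hAZ) (Ne.symm hBZ),
          Equiv.swap_apply_of_ne_of_ne (Ne.symm hBZ) (Ne.symm hCZ),
          Equiv.swap_apply_right]
      have hπlZ : πl x = x := by
        rw [hπl]
        simp only [Equiv.trans_apply]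
        rw [Equiv.swap_apply_of_ne_of_ne (Ne.symm hAZ) (Ne.symm hBZ),
          Equiv.swap_apply_of_ne_of_ne (Ne.symm hAZ) (Ne.symm hCZ)]
      rw [hsc x, hπaZ, hπbZ, hπlZ, hOEr]
      have p1 : (((n-2)/2:ℕ):ℝ) * s C ≤ (((n-2)/2:ℕ):ℝ) * s A :=
        mul_le_mul_of_nonneg_left (hmono' C A (by omega)) hEnn
      have p2 : (((n-2)/2:ℕ):ℝ) * s C ≤ (((n-2)/2:ℕ):ℝ) * s B :=
        mul_le_mul_of_nonneg_left hCB hEnn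
      linarith [hsZA, hZC]
    · have hxZ' : x ≠ Z := hxZ
      have hπax : πa x = x := by
        rw [hπa]
        simp only [Equiv.trans_apply]
        rw [Equiv.swap_apply_of_ne_of_ne hxA hxC, Equiv.swap_apply_of_ne_of_ne hxC hxZ']
      have hπbx : πb x = x := by
        rw [hπb]
        simp only [Equiv.trans_apply]
        rw [Equiv.swap_apply_of_ne_of_ne hxA hxB, Equiv.swap_apply_of_ne_of_ne hxB hxC,
          Equiv.swap_apply_of_ne_of_ne hxC hxZ']
      have hπlx : πl x = x := by
        rw [hπl]
        simp only [Equiv.trans_apply]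
        rw [Equiv.swap_apply_of_ne_of_ne hxA hxB, Equiv.swap_apply_of_ne_of_ne hxA hxC]
      rw [hsc x, hπax, hπbx, hπlx, hOEr]
      have hxsC : s x ≤ s C := hmono' x C (by omega)
      have hxsA : s x ≤ s A := hmono' x A (by omega)
      have hxsB : s x ≤ s B := hmono' x B (by omega)
      have p1 : (((n-2)/2:ℕ):ℝ) * s x ≤ (((n-2)/2:ℕ):ℝ) * s A :=
        mul_le_mul_of_nonneg_left hxsA hEnn
      have p2 : (((n-2)/2:ℕ):ℝ) * s x ≤ (((n-2)/2:ℕ):ℝ) * s B :=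
        mul_le_mul_of_nonneg_left hxsB hEnn
      linarith
  exact Stmt9.c2_attack hm hspec A B C hAv hBv hCv hsBA Q hQ hcb hca hoth hR


set_option maxHeartbeats 1000000 in
lemma branchB {n m : ℕ} (hn : 2 < n) (hm : 3 ≤ m) (s : Fin m → ℝ)
    (hmono : Monotone s) {f : Profile n m → Fin m} {i₀ : Fin n}
    (hspec : ∀ P : Profile n m, f P ∈ ScoreSet s P ∧
      ∀ y ∈ ScoreSet s P, y ≠ f P → prefers (P i₀) (f P) y)
    (hR : RFTT f)
    (A B C Z : Fin m) (hAv : (A:ℕ) = m-1) (hBv : (B:ℕ) = m-2)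
    (hCv : (C:ℕ) = m-3) (hZv : (Z:ℕ) = 0)
    (hsZA : s Z < s A) (hsBA : s B < s A)
    (hparO : n % 2 = 1) (hG : s B = s Z) : False := by
  obtain ⟨z0, hz0⟩ : ∃ z : Fin n, (z:ℕ) = 0 := ⟨⟨0, by omega⟩, rfl⟩
  obtain ⟨z1, hz1⟩ : ∃ z : Fin n, (z:ℕ) = 1 := ⟨⟨1, by omega⟩, rfl⟩
  have hne : ∀ (u v : Fin m), (u:ℕ) ≠ (v:ℕ) → u ≠ v :=
    fun u v h hc => h (congrArg Fin.val hc)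
  have hmono' : ∀ u v : Fin m, (u:ℕ) ≤ (v:ℕ) → s u ≤ s v :=
    fun u v h => hmono h
  have hZB : s Z ≤ s B := hmono' Z B (by omega)
  have hZC : s Z ≤ s C := hmono' Z C (by omega)
  have hCB : s C ≤ s B := hmono' C B (by omega)
  have hone : ∀ y : Fin m, (1 : Pref m).symm y = y := fun y => rfl
  set σ : Equiv.Perm (Fin n) := Equiv.swap z0 i₀ with hσdef
  have hσ0 : σ i₀ = z0 := Equiv.swap_apply_right _ _
  have hσσ1 : σ (σ z1) = z1 := Equiv.swap_apply_self _ _ _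
  have hAB : A ≠ B := hne _ _ (by omega)
  have hAC : A ≠ C := hne _ _ (by omega)
  have hAZ : A ≠ Z := hne _ _ (by omega)
  have hBC : B ≠ C := hne _ _ (by omega)
  have hBZ : B ≠ Z := hne _ _ (by omega)
  have hflat : ∀ p : Fin m, (p:ℕ) ≤ m-2 → s p = s Z := by
    intro p hp
    have h1 : s p ≤ s B := hmono' p B (by omega)
    have h2 : s Z ≤ s p := hmono' Z p (by omega)
    rw [hG] at h1
    linarith
  have hsC0 : s C = s Z := hflat C (by omega)
  set πa : Equiv.Perm (Fin m) := (Equiv.swap A C).trans (Equiv.swap C Z) with hπa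
  set πs : Equiv.Perm (Fin m) := Equiv.swap B A with hπs
  set πm : Equiv.Perm (Fin m) := (Equiv.swap B C).trans πa with hπm
  have hπaA : πa A = Z := by
    rw [hπa]; simp only [Equiv.trans_apply, Equiv.swap_apply_left]
  have hπaB : πa B = B := by
    rw [hπa]; simp only [Equiv.trans_apply]
    rw [Equiv.swap_apply_of_ne_of_ne (Ne.symm hAB) hBC,
      Equiv.swap_apply_of_ne_of_ne hBC hBZ]
  have hπaC : πa C = A := by
    rw [hπa]; simp only [Equiv.trans_apply, Equiv.swap_apply_right]
    rw [Equiv.swap_apply_of_ne_of_ne hAC hAZ]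
  have hπsA : πs A = B := Equiv.swap_apply_right B A
  have hπsB : πs B = A := Equiv.swap_apply_left B A
  have hπsC : πs C = C := by
    rw [hπs, Equiv.swap_apply_of_ne_of_ne (Ne.symm hBC) (Ne.symm hAC)]
  have hπmA : πm A = Z := by
    rw [hπm]; simp only [Equiv.trans_apply]
    rw [Equiv.swap_apply_of_ne_of_ne hAB hAC]
    exact hπaA
  have hπmB : πm B = A := by
    rw [hπm]; simp only [Equiv.trans_apply, Equiv.swap_apply_left]
    exact hπaC
  have hπmC : πm C = B := by
    rw [hπm]; simp only [Equiv.trans_apply, Equiv.swap_apply_right]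
    exact hπaB
  have hn3' : 3 ≤ n := by omega
  set Qc : Profile n m := fun k => if (k:ℕ) = 0 then 1 else if (k:ℕ) = 1 then πa.symm
    else if (k:ℕ) % 2 = 0 then πs.symm else 1 with hQc
  set Q : Profile n m := fun k => Qc (σ k) with hQdef
  have hQ : Q i₀ = 1 := by
    show Qc (σ i₀) = 1
    rw [hσ0, hQc]
    simp [hz0]
  have hsc : ∀ x, score s Q x
      = s x + s (πa x) + (((n-1)/2 : ℕ) : ℝ) * s (πs x)
        + (((n-2)/2 : ℕ) : ℝ) * s x := by
    intro x
    rw [hQdef, Stmt9.score_conj s Qc σ x, hQc,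
      Stmt9.scoreB hn3' s 1 πa.symm πs.symm 1 x]
    simp [hone]
  have hOE : ((n-1)/2 : ℕ) = ((n-2)/2 : ℕ) + 1 := by omega
  have hOEr : (((n-1)/2 : ℕ) : ℝ) = (((n-2)/2 : ℕ) : ℝ) + 1 := by exact_mod_cast hOE
  have hEnn : (0:ℝ) ≤ (((n-2)/2 : ℕ) : ℝ) := by positivity
  have pOZA : (((n-2)/2:ℕ):ℝ) * s Z ≤ (((n-2)/2:ℕ):ℝ) * s A :=
    mul_le_mul_of_nonneg_left hsZA.le hEnn
  have hA1 : score s Q A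
      = s A + s Z + (((n-1)/2:ℕ):ℝ) * s B + (((n-2)/2:ℕ):ℝ) * s A := by
    rw [hsc A, hπaA, hπsA]
  have hB1 : score s Q B
      = s B + s B + (((n-1)/2:ℕ):ℝ) * s A + (((n-2)/2:ℕ):ℝ) * s B := by
    rw [hsc B, hπaB, hπsB]
  have hC1 : score s Q C
      = s C + s A + (((n-1)/2:ℕ):ℝ) * s C + (((n-2)/2:ℕ):ℝ) * s C := by
    rw [hsc C, hπaC, hπsC]
  have hABeq : score s Q B = score s Q A := by
    rw [hA1, hB1, hOEr, hG]
    ring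
  have hCle : score s Q C ≤ score s Q A := by
    rw [hA1, hC1, hOEr, hG, hsC0]
    linarith [pOZA]
  have hyle : ∀ y : Fin m, (y:ℕ) < m-3 → score s Q y ≤ score s Q A := by
    intro y hy
    have hyA : y ≠ A := hne _ _ (by omega)
    have hyB : y ≠ B := hne _ _ (by omega)
    have hyC : y ≠ C := hne _ _ (by omega)
    have hsy : s y = s Z := hflat y (by omega)
    have hπsy : πs y = y := by
      rw [hπs, Equiv.swap_apply_of_ne_of_ne hyB hyA]
    have hπay : πa y ≠ A := fun h => hyC (πa.injective (h.trans hπaC.symm))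
    have hsπay : s (πa y) = s Z := by
      refine hflat (πa y) ?_
      have h1 := (πa y).isLt
      have h2 : ((πa y : Fin m) : ℕ) ≠ m-1 := fun h => hπay (Fin.ext (by omega))
      omega
    rw [hsc y, hπsy, hA1, hsy, hsπay, hOEr, hG]
    linarith [pOZA]
  have fP : f Q = A := by
    refine Stmt9.winner_eq hspec Q A ?_ ?_
    · intro y
      rcases (by
        have hy := y.isLt
        by_cases h1 : (y:ℕ) = m-1
        · exact Or.inl (Fin.ext (by omega) : y = A)
        by_cases h2 : (y:ℕ) = m-2
        · exact Or.inr (Or.inl (Fin.ext (by omega) : y = B))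
        by_cases h3 : (y:ℕ) = m-3
        · exact Or.inr (Or.inr (Or.inl (Fin.ext (by omega) : y = C)))
        · exact Or.inr (Or.inr (Or.inr (by omega : (y:ℕ) < m-3)))
        : y = A ∨ y = B ∨ y = C ∨ (y:ℕ) < m-3) with h | h | h | h
      · rw [h]
      · rw [h, hABeq]
      · rw [h]; exact hCle
      · exact hyle y h
    · intro y _ hy
      unfold prefers
      rw [hQ, hone, hone, Fin.lt_iff_val_lt_val]
      have : (y:ℕ) ≠ m-1 := fun h => hy (Fin.ext (by omega))
      have := y.isLt
      omega
  set i : Fin n := σ z1 with hidef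
  have hPi : Q i = πa.symm := by
    show Qc (σ (σ z1)) = πa.symm
    rw [hσσ1, hQc]
    simp [hz1]
  set P' : Profile n m := update Q i πm.symm with hP'def
  have hupd : ∀ x, score s P' x = score s Q x - s (πa x) + s (πm x) := by
    intro x
    rw [hP'def, Stmt9.score_update, hPi]
    simp
  have hupA : score s P' A = score s Q A := by
    rw [hupd A, hπaA, hπmA]; ring
  have hupB : score s P' B = score s Q A + (s A - s Z) := by
    rw [hupd B, hπaB, hπmB, hABeq, hG]; ring
  have hupC : score s P' C = score s Q C - (s A - s Z) := by
    rw [hupd C, hπaC, hπmC, hG]; ring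
  have hupy : ∀ y : Fin m, (y:ℕ) < m-3 → score s P' y = score s Q y := by
    intro y hy
    have hyB : y ≠ B := hne _ _ (by omega)
    have hyC : y ≠ C := hne _ _ (by omega)
    have hπmy : πm y = πa y := by
      rw [hπm]; simp only [Equiv.trans_apply]
      rw [Equiv.swap_apply_of_ne_of_ne hyB hyC]
    rw [hupd y, hπmy]; ring
  have fP' : f P' = B := by
    refine Stmt9.winner_eq hspec P' B ?_ ?_
    · intro y
      rcases (by
        have hy := y.isLt
        by_cases h1 : (y:ℕ) = m-1
        · exact Or.inl (Fin.ext (by omega) : y = A)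
        by_cases h2 : (y:ℕ) = m-2
        · exact Or.inr (Or.inl (Fin.ext (by omega) : y = B))
        by_cases h3 : (y:ℕ) = m-3
        · exact Or.inr (Or.inr (Or.inl (Fin.ext (by omega) : y = C)))
        · exact Or.inr (Or.inr (Or.inr (by omega : (y:ℕ) < m-3)))
        : y = A ∨ y = B ∨ y = C ∨ (y:ℕ) < m-3) with h | h | h | h
      · rw [h, hupA, hupB]; linarith
      · rw [h]
      · rw [h, hupC, hupB]; linarith [hCle]
      · rw [hupy y h, hupB]; linarith [hyle y h]
    · intro y hy hyB'
      exfalso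
      rcases (by
        have hy' := y.isLt
        by_cases h1 : (y:ℕ) = m-1
        · exact Or.inl (Fin.ext (by omega) : y = A)
        by_cases h2 : (y:ℕ) = m-2
        · exact Or.inr (Or.inl (Fin.ext (by omega) : y = B))
        by_cases h3 : (y:ℕ) = m-3
        · exact Or.inr (Or.inr (Or.inl (Fin.ext (by omega) : y = C)))
        · exact Or.inr (Or.inr (Or.inr (by omega : (y:ℕ) < m-3)))
        : y = A ∨ y = B ∨ y = C ∨ (y:ℕ) < m-3) with h | h | h | h
      · rw [h, hupA] at hy; rw [hupB] at hy; linarith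
      · exact hyB' h
      · rw [h, hupC] at hy; rw [hupB] at hy; linarith [hCle]
      · rw [hupy y h] at hy; rw [hupB] at hy; linarith [hyle y h]
  have hbot : (((Q i).symm (f Q)) : ℕ) = 0 := by
    rw [fP, hPi]
    simp only [Equiv.symm_symm]
    rw [hπaA]
    exact hZv
  have hneq : f (update Q i πm.symm) ≠ f Q := by
    rw [← hP'def, fP', fP]
    exact Ne.symm hAB
  exact Stmt9.bottom_attack hR i Q πm.symm hbot hneq


set_option maxHeartbeats 1000000 in
lemma branchC {n m : ℕ} (hn : 2 < n) (hm : 3 ≤ m) (s : Fin m → ℝ)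
    (hmono : Monotone s) {f : Profile n m → Fin m} {i₀ : Fin n}
    (hspec : ∀ P : Profile n m, f P ∈ ScoreSet s P ∧
      ∀ y ∈ ScoreSet s P, y ≠ f P → prefers (P i₀) (f P) y)
    (hR : RFTT f)
    (A B C Z : Fin m) (hAv : (A:ℕ) = m-1) (hBv : (B:ℕ) = m-2)
    (hCv : (C:ℕ) = m-3) (hZv : (Z:ℕ) = 0)
    (hsZA : s Z < s A) (hsBA : s B < s A)
    (hparO : n % 2 = 1) (hGlt : s Z < s B) (hm3 : ¬ m = 3) : False := by
  obtain ⟨z0, hz0⟩ : ∃ z : Fin n, (z:ℕ) = 0 := ⟨⟨0, by omega⟩, rfl⟩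
  obtain ⟨z1, hz1⟩ : ∃ z : Fin n, (z:ℕ) = 1 := ⟨⟨1, by omega⟩, rfl⟩
  have hne : ∀ (u v : Fin m), (u:ℕ) ≠ (v:ℕ) → u ≠ v :=
    fun u v h hc => h (congrArg Fin.val hc)
  have hmono' : ∀ u v : Fin m, (u:ℕ) ≤ (v:ℕ) → s u ≤ s v :=
    fun u v h => hmono h
  have hZB : s Z ≤ s B := hmono' Z B (by omega)
  have hZC : s Z ≤ s C := hmono' Z C (by omega)
  have hCB : s C ≤ s B := hmono' C B (by omega)
  have hone : ∀ y : Fin m, (1 : Pref m).symm y = y := fun y => rfl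
  set σ : Equiv.Perm (Fin n) := Equiv.swap z0 i₀ with hσdef
  have hσ0 : σ i₀ = z0 := Equiv.swap_apply_right _ _
  have hσσ1 : σ (σ z1) = z1 := Equiv.swap_apply_self _ _ _
  have hAB : A ≠ B := hne _ _ (by omega)
  have hAC : A ≠ C := hne _ _ (by omega)
  have hAZ : A ≠ Z := hne _ _ (by omega)
  have hBC : B ≠ C := hne _ _ (by omega)
  have hBZ : B ≠ Z := hne _ _ (by omega)
  have hCZ : C ≠ Z := hne _ _ (by omega)
  set πa : Equiv.Perm (Fin m) := (Equiv.swap A C).trans (Equiv.swap C Z) with hπa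
  set πb : Equiv.Perm (Fin m) :=
    (Equiv.swap A B).trans ((Equiv.swap B C).trans (Equiv.swap C Z)) with hπb
  set πl : Equiv.Perm (Fin m) := (Equiv.swap B C).trans (Equiv.swap A Z) with hπl
  have hπaA : πa A = Z := by
    rw [hπa]; simp only [Equiv.trans_apply, Equiv.swap_apply_left]
  have hπaB : πa B = B := by
    rw [hπa]; simp only [Equiv.trans_apply]
    rw [Equiv.swap_apply_of_ne_of_ne (Ne.symm hAB) hBC,
      Equiv.swap_apply_of_ne_of_ne hBC hBZ]
  have hπaC : πa C = A := by
    rw [hπa]; simp only [Equiv.trans_apply, Equiv.swap_apply_right]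
    rw [Equiv.swap_apply_of_ne_of_ne hAC hAZ]
  have hπbA : πb A = Z := by
    rw [hπb]; simp only [Equiv.trans_apply, Equiv.swap_apply_left]
  have hπbB : πb B = A := by
    rw [hπb]; simp only [Equiv.trans_apply, Equiv.swap_apply_right]
    rw [Equiv.swap_apply_of_ne_of_ne hAB hAC, Equiv.swap_apply_of_ne_of_ne hAC hAZ]
  have hπbC : πb C = B := by
    rw [hπb]; simp only [Equiv.trans_apply]
    rw [Equiv.swap_apply_of_ne_of_ne (Ne.symm hAC) (Ne.symm hBC),
      Equiv.swap_apply_right, Equiv.swap_apply_of_ne_of_ne hBC hBZ]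
  have hπlA : πl A = Z := by
    rw [hπl]; simp only [Equiv.trans_apply]
    rw [Equiv.swap_apply_of_ne_of_ne hAB hAC, Equiv.swap_apply_left]
  have hπlB : πl B = C := by
    rw [hπl]; simp only [Equiv.trans_apply, Equiv.swap_apply_left]
    rw [Equiv.swap_apply_of_ne_of_ne (Ne.symm hAC) hCZ]
  have hπlC : πl C = B := by
    rw [hπl]; simp only [Equiv.trans_apply, Equiv.swap_apply_right]
    rw [Equiv.swap_apply_of_ne_of_ne (Ne.symm hAB) hBZ]
  have hn3 : 3 ≤ n := by omega
  set Qc : Profile n m := fun k => if (k:ℕ) = 0 then 1 else if (k:ℕ) = n-1 then πl.symm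
    else if (k:ℕ) % 2 = 1 then πa.symm else πb.symm with hQc
  set Q : Profile n m := fun k => Qc (σ k) with hQdef
  have hQ : Q i₀ = 1 := by
    show Qc (σ i₀) = 1
    rw [hσ0, hQc]
    simp [hz0]
  have hsc : ∀ x, score s Q x
      = s x + s (πl x) + (((n-1)/2 : ℕ) : ℝ) * s (πa x)
        + (((n-2)/2 : ℕ) : ℝ) * s (πb x) := by
    intro x
    rw [hQdef, Stmt9.score_conj s Qc σ x, hQc,
      Stmt9.score4 hn3 s 1 πa.symm πb.symm πl.symm x]
    simp [hone]
  have hOE : ((n-1)/2 : ℕ) = ((n-2)/2 : ℕ) + 1 := by omega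
  have hOEr : (((n-1)/2 : ℕ) : ℝ) = (((n-2)/2 : ℕ) : ℝ) + 1 := by exact_mod_cast hOE
  have hEnn : (0:ℝ) ≤ (((n-2)/2 : ℕ) : ℝ) := by positivity
  have hA1 : score s Q A
      = s A + s Z + (((n-1)/2:ℕ):ℝ) * s Z + (((n-2)/2:ℕ):ℝ) * s Z := by
    rw [hsc A, hπlA, hπaA, hπbA]
  have hB1 : score s Q B
      = s B + s C + (((n-1)/2:ℕ):ℝ) * s B + (((n-2)/2:ℕ):ℝ) * s A := by
    rw [hsc B, hπlB, hπaB, hπbB]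
  have hC1 : score s Q C
      = s C + s B + (((n-1)/2:ℕ):ℝ) * s A + (((n-2)/2:ℕ):ℝ) * s B := by
    rw [hsc C, hπlC, hπaC, hπbC]
  have hcb : score s Q C = score s Q B + (s A - s B) := by
    rw [hB1, hC1, hOEr]
    ring
  have hca : score s Q A < score s Q C := by
    rw [hA1, hC1, hOEr]
    have p1 : (((n-2)/2:ℕ):ℝ) * s Z ≤ (((n-2)/2:ℕ):ℝ) * s B :=
      mul_le_mul_of_nonneg_left hZB hEnn
    have p2 : (((n-2)/2:ℕ):ℝ) * s Z ≤ (((n-2)/2:ℕ):ℝ) * s A :=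
      mul_le_mul_of_nonneg_left (by linarith) hEnn
    linarith [p1, p2]
  have hoth : ∀ x : Fin m, (x:ℕ) < m-3 → score s Q x ≤ score s Q C := by
    intro x hx
    have hxA : x ≠ A := hne _ _ (by omega)
    have hxB : x ≠ B := hne _ _ (by omega)
    have hxC : x ≠ C := hne _ _ (by omega)
    rw [hC1, hOEr]
    by_cases hxZ : x = Z
    · subst hxZ
      have hπax : πa x = C := by
        rw [hπa]; simp only [Equiv.trans_apply]
        rw [Equiv.swap_apply_of_ne_of_ne (Ne.symm hAZ) (Ne.symm hCZ),
          Equiv.swap_apply_right]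
      have hπbx : πb x = C := by
        rw [hπb]; simp only [Equiv.trans_apply]
        rw [Equiv.swap_apply_of_ne_of_ne (Ne.symm hAZ) (Ne.symm hBZ),
          Equiv.swap_apply_of_ne_of_ne (Ne.symm hBZ) (Ne.symm hCZ),
          Equiv.swap_apply_right]
      have hπlx : πl x = A := by
        rw [hπl]; simp only [Equiv.trans_apply]
        rw [Equiv.swap_apply_of_ne_of_ne (Ne.symm hBZ) (Ne.symm hCZ),
          Equiv.swap_apply_right]
      rw [hsc x, hπax, hπbx, hπlx, hOEr]
      have hCA : s C ≤ s A := hmono' C A (by omega)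
      have p1 : (((n-2)/2:ℕ):ℝ) * s C ≤ (((n-2)/2:ℕ):ℝ) * s A :=
        mul_le_mul_of_nonneg_left hCA hEnn
      have p2 : (((n-2)/2:ℕ):ℝ) * s C ≤ (((n-2)/2:ℕ):ℝ) * s B :=
        mul_le_mul_of_nonneg_left hCB hEnn
      linarith [p1, p2, hZC, hCB]
    · have hπax : πa x = x := by
        rw [hπa]; simp only [Equiv.trans_apply]
        rw [Equiv.swap_apply_of_ne_of_ne hxA hxC, Equiv.swap_apply_of_ne_of_ne hxC hxZ]
      have hπbx : πb x = x := by
        rw [hπb]; simp only [Equiv.trans_apply]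
        rw [Equiv.swap_apply_of_ne_of_ne hxA hxB, Equiv.swap_apply_of_ne_of_ne hxB hxC,
          Equiv.swap_apply_of_ne_of_ne hxC hxZ]
      have hπlx : πl x = x := by
        rw [hπl]; simp only [Equiv.trans_apply]
        rw [Equiv.swap_apply_of_ne_of_ne hxB hxC, Equiv.swap_apply_of_ne_of_ne hxA hxZ]
      rw [hsc x, hπax, hπbx, hπlx, hOEr]
      have hxsC : s x ≤ s C := hmono' x C (by omega)
      have hxsA : s x ≤ s A := hmono' x A (by omega)
      have hxsB : s x ≤ s B := hmono' x B (by omega)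
      have p1 : (((n-2)/2:ℕ):ℝ) * s x ≤ (((n-2)/2:ℕ):ℝ) * s A :=
        mul_le_mul_of_nonneg_left hxsA hEnn
      have p2 : (((n-2)/2:ℕ):ℝ) * s x ≤ (((n-2)/2:ℕ):ℝ) * s B :=
        mul_le_mul_of_nonneg_left hxsB hEnn
      linarith [p1, p2, hxsC, hxsB]
  exact Stmt9.c2_attack hm hspec A B C hAv hBv hCv hsBA Q hQ hcb hca hoth hR



set_option maxHeartbeats 1000000 in
lemma branchD {n m : ℕ} (hn : 2 < n) (hm : 3 ≤ m) (s : Fin m → ℝ)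
    (hmono : Monotone s) {f : Profile n m → Fin m} {i₀ : Fin n}
    (hspec : ∀ P : Profile n m, f P ∈ ScoreSet s P ∧
      ∀ y ∈ ScoreSet s P, y ≠ f P → prefers (P i₀) (f P) y)
    (hR : RFTT f)
    (A B C Z : Fin m) (hAv : (A:ℕ) = m-1) (hBv : (B:ℕ) = m-2)
    (hCv : (C:ℕ) = m-3) (hZv : (Z:ℕ) = 0)
    (hsZA : s Z < s A) (hsBA : s B < s A)
    (hparO : n % 2 = 1) (hGlt : s Z < s B) (hm3 : m = 3) (hn3 : ¬ n = 3) : False := by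
  obtain ⟨z0, hz0⟩ : ∃ z : Fin n, (z:ℕ) = 0 := ⟨⟨0, by omega⟩, rfl⟩
  obtain ⟨z1, hz1⟩ : ∃ z : Fin n, (z:ℕ) = 1 := ⟨⟨1, by omega⟩, rfl⟩
  have hne : ∀ (u v : Fin m), (u:ℕ) ≠ (v:ℕ) → u ≠ v :=
    fun u v h hc => h (congrArg Fin.val hc)
  have hmono' : ∀ u v : Fin m, (u:ℕ) ≤ (v:ℕ) → s u ≤ s v :=
    fun u v h => hmono h
  have hZB : s Z ≤ s B := hmono' Z B (by omega)
  have hZC : s Z ≤ s C := hmono' Z C (by omega)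
  have hCB : s C ≤ s B := hmono' C B (by omega)
  have hone : ∀ y : Fin m, (1 : Pref m).symm y = y := fun y => rfl
  set σ : Equiv.Perm (Fin n) := Equiv.swap z0 i₀ with hσdef
  have hσ0 : σ i₀ = z0 := Equiv.swap_apply_right _ _
  have hσσ1 : σ (σ z1) = z1 := Equiv.swap_apply_self _ _ _
  have hAB : A ≠ B := hne _ _ (by omega)
  have hAC : A ≠ C := hne _ _ (by omega)
  have hAZ : A ≠ Z := hne _ _ (by omega)
  have hBC : B ≠ C := hne _ _ (by omega)
  have hBZ : B ≠ Z := hne _ _ (by omega)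
  have hCZe : C = Z := Fin.ext (by omega)
  set πl : Equiv.Perm (Fin m) := Equiv.swap B C with hπl
  set πa : Equiv.Perm (Fin m) := (Equiv.swap A C).trans (Equiv.swap C Z) with hπa
  set πb : Equiv.Perm (Fin m) :=
    (Equiv.swap A B).trans ((Equiv.swap B C).trans (Equiv.swap C Z)) with hπb
  have hπaA : πa A = Z := by
    rw [hπa]; simp only [Equiv.trans_apply, Equiv.swap_apply_left]
  have hπaB : πa B = B := by
    rw [hπa]; simp only [Equiv.trans_apply]
    rw [Equiv.swap_apply_of_ne_of_ne (Ne.symm hAB) hBC,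
      Equiv.swap_apply_of_ne_of_ne hBC hBZ]
  have hπaC : πa C = A := by
    rw [hπa]; simp only [Equiv.trans_apply, Equiv.swap_apply_right]
    rw [Equiv.swap_apply_of_ne_of_ne hAC hAZ]
  have hπbA : πb A = Z := by
    rw [hπb]; simp only [Equiv.trans_apply, Equiv.swap_apply_left]
  have hπbB : πb B = A := by
    rw [hπb]; simp only [Equiv.trans_apply, Equiv.swap_apply_right]
    rw [Equiv.swap_apply_of_ne_of_ne hAB hAC, Equiv.swap_apply_of_ne_of_ne hAC hAZ]
  have hπbC : πb C = B := by
    rw [hπb]; simp only [Equiv.trans_apply]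
    rw [Equiv.swap_apply_of_ne_of_ne (Ne.symm hAC) (Ne.symm hBC),
      Equiv.swap_apply_right, Equiv.swap_apply_of_ne_of_ne hBC hBZ]
  have hπlA : πl A = A := by
    rw [hπl, Equiv.swap_apply_of_ne_of_ne hAB hAC]
  have hπlB : πl B = C := Equiv.swap_apply_left B C
  have hπlC : πl C = B := Equiv.swap_apply_right B C
  have hn3' : 3 ≤ n := by omega
  set Qc : Profile n m := fun k => if (k:ℕ) = 0 then 1 else if (k:ℕ) = n-1 then πl.symm
    else if (k:ℕ) % 2 = 1 then πa.symm else πb.symm with hQc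
  set Q : Profile n m := fun k => Qc (σ k) with hQdef
  have hQ : Q i₀ = 1 := by
    show Qc (σ i₀) = 1
    rw [hσ0, hQc]
    simp [hz0]
  have hsc : ∀ x, score s Q x
      = s x + s (πl x) + (((n-1)/2 : ℕ) : ℝ) * s (πa x)
        + (((n-2)/2 : ℕ) : ℝ) * s (πb x) := by
    intro x
    rw [hQdef, Stmt9.score_conj s Qc σ x, hQc,
      Stmt9.score4 hn3' s 1 πa.symm πb.symm πl.symm x]
    simp [hone]
  have hOE : ((n-1)/2 : ℕ) = ((n-2)/2 : ℕ) + 1 := by omega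
  have hOEr : (((n-1)/2 : ℕ) : ℝ) = (((n-2)/2 : ℕ) : ℝ) + 1 := by exact_mod_cast hOE
  have hE1 : 1 ≤ ((n-2)/2 : ℕ) := by omega
  have hE1r : (1:ℝ) ≤ (((n-2)/2 : ℕ) : ℝ) := by exact_mod_cast hE1
  have hEnn : (0:ℝ) ≤ (((n-2)/2 : ℕ) : ℝ) := by positivity
  have hA1 : score s Q A
      = s A + s A + (((n-1)/2:ℕ):ℝ) * s Z + (((n-2)/2:ℕ):ℝ) * s Z := by
    rw [hsc A, hπlA, hπaA, hπbA]
  have hB1 : score s Q B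
      = s B + s C + (((n-1)/2:ℕ):ℝ) * s B + (((n-2)/2:ℕ):ℝ) * s A := by
    rw [hsc B, hπlB, hπaB, hπbB]
  have hC1 : score s Q C
      = s C + s B + (((n-1)/2:ℕ):ℝ) * s A + (((n-2)/2:ℕ):ℝ) * s B := by
    rw [hsc C, hπlC, hπaC, hπbC]
  have hcb : score s Q C = score s Q B + (s A - s B) := by
    rw [hB1, hC1, hOEr]
    ring
  have hca : score s Q A < score s Q C := by
    rw [hA1, hC1, hOEr]
    have hsCZ : s C = s Z := by rw [hCZe]
    have p2 : (((n-2)/2:ℕ):ℝ) * s Z ≤ (((n-2)/2:ℕ):ℝ) * s B :=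
      mul_le_mul_of_nonneg_left hZB hEnn
    have p3 : (0:ℝ) ≤ ((((n-2)/2:ℕ):ℝ) - 1) * (s A - s Z) :=
      mul_nonneg (by linarith) (by linarith)
    nlinarith [p2, p3, hGlt, hsCZ]
  have hoth : ∀ x : Fin m, (x:ℕ) < m-3 → score s Q x ≤ score s Q C := by
    intro x hx
    exact absurd hx (by omega)
  exact Stmt9.c2_attack hm hspec A B C hAv hBv hCv hsBA Q hQ hcb hca hoth hR


set_option maxHeartbeats 1000000 in
lemma branchE {n m : ℕ} (hn : 2 < n) (hm : 3 ≤ m) (s : Fin m → ℝ)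
    (hmono : Monotone s) {f : Profile n m → Fin m} {i₀ : Fin n}
    (hspec : ∀ P : Profile n m, f P ∈ ScoreSet s P ∧
      ∀ y ∈ ScoreSet s P, y ≠ f P → prefers (P i₀) (f P) y)
    (hR : RFTT f)
    (A B C Z : Fin m) (hAv : (A:ℕ) = m-1) (hBv : (B:ℕ) = m-2)
    (hCv : (C:ℕ) = m-3) (hZv : (Z:ℕ) = 0)
    (hsZA : s Z < s A) (hsBA : s B < s A)
    (hn3 : n = 3) (hm3 : m = 3) : False := by
  obtain ⟨z0, hz0⟩ : ∃ z : Fin n, (z:ℕ) = 0 := ⟨⟨0, by omega⟩, rfl⟩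
  obtain ⟨z1, hz1⟩ : ∃ z : Fin n, (z:ℕ) = 1 := ⟨⟨1, by omega⟩, rfl⟩
  have hne : ∀ (u v : Fin m), (u:ℕ) ≠ (v:ℕ) → u ≠ v :=
    fun u v h hc => h (congrArg Fin.val hc)
  have hmono' : ∀ u v : Fin m, (u:ℕ) ≤ (v:ℕ) → s u ≤ s v :=
    fun u v h => hmono h
  have hZB : s Z ≤ s B := hmono' Z B (by omega)
  have hZC : s Z ≤ s C := hmono' Z C (by omega)
  have hCB : s C ≤ s B := hmono' C B (by omega)
  have hone : ∀ y : Fin m, (1 : Pref m).symm y = y := fun y => rfl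
  set σ : Equiv.Perm (Fin n) := Equiv.swap z0 i₀ with hσdef
  have hσ0 : σ i₀ = z0 := Equiv.swap_apply_right _ _
  have hσσ1 : σ (σ z1) = z1 := Equiv.swap_apply_self _ _ _
  have hAB : A ≠ B := hne _ _ (by omega)
  have hAC : A ≠ C := hne _ _ (by omega)
  have hAZ : A ≠ Z := hne _ _ (by omega)
  have hBC : B ≠ C := hne _ _ (by omega)
  have hBZ : B ≠ Z := hne _ _ (by omega)
  set πm : Equiv.Perm (Fin m) := Equiv.swap A C with hπm
  set π1 : Equiv.Perm (Fin m) := (Equiv.swap A C).trans (Equiv.swap A B) with hπ1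
  set π2 : Equiv.Perm (Fin m) := (Equiv.swap A B).trans (Equiv.swap A C) with hπ2
  have hπ1A : π1 A = C := by
    rw [hπ1]; simp only [Equiv.trans_apply, Equiv.swap_apply_left]
    rw [Equiv.swap_apply_of_ne_of_ne (Ne.symm hAC) (Ne.symm hBC)]
  have hπ1B : π1 B = A := by
    rw [hπ1]; simp only [Equiv.trans_apply]
    rw [Equiv.swap_apply_of_ne_of_ne (Ne.symm hAB) hBC, Equiv.swap_apply_right]
  have hπ1C : π1 C = B := by
    rw [hπ1]; simp only [Equiv.trans_apply, Equiv.swap_apply_right,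
      Equiv.swap_apply_left]
  have hπ2A : π2 A = B := by
    rw [hπ2]; simp only [Equiv.trans_apply, Equiv.swap_apply_left]
    rw [Equiv.swap_apply_of_ne_of_ne (Ne.symm hAB) hBC]
  have hπ2B : π2 B = C := by
    rw [hπ2]; simp only [Equiv.trans_apply, Equiv.swap_apply_right,
      Equiv.swap_apply_left]
  have hπ2C : π2 C = A := by
    rw [hπ2]; simp only [Equiv.trans_apply, Equiv.swap_apply_right]
    rw [Equiv.swap_apply_of_ne_of_ne (Ne.symm hAC) (Ne.symm hBC),
      Equiv.swap_apply_right]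
  have hπmA : πm A = C := Equiv.swap_apply_left A C
  have hπmB : πm B = B := by
    rw [hπm, Equiv.swap_apply_of_ne_of_ne (Ne.symm hAB) hBC]
  have hπmC : πm C = A := Equiv.swap_apply_right A C
  set Qc : Profile n m := fun k => if (k:ℕ) = 0 then 1 else if (k:ℕ) = 1 then π1.symm
    else π2.symm with hQc
  set Q : Profile n m := fun k => Qc (σ k) with hQdef
  have hQ : Q i₀ = 1 := by
    show Qc (σ i₀) = 1
    rw [hσ0, hQc]
    simp [hz0]
  have hsc : ∀ x, score s Q x = s x + s (π1 x) + s (π2 x) := by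
    intro x
    rw [hQdef, Stmt9.score_conj s Qc σ x, hQc,
      Stmt9.score3 hn3 s 1 π1.symm π2.symm x]
    simp [hone]
  have hA1 : score s Q A = s A + s C + s B := by rw [hsc A, hπ1A, hπ2A]
  have hB1 : score s Q B = s B + s A + s C := by rw [hsc B, hπ1B, hπ2B]
  have hC1 : score s Q C = s C + s B + s A := by rw [hsc C, hπ1C, hπ2C]
  have cases3 : ∀ y : Fin m, y = A ∨ y = B ∨ y = C := by
    intro y
    have hy := y.isLt
    by_cases h1 : (y:ℕ) = m-1
    · exact Or.inl (Fin.ext (by omega))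
    by_cases h2 : (y:ℕ) = m-2
    · exact Or.inr (Or.inl (Fin.ext (by omega)))
    · exact Or.inr (Or.inr (Fin.ext (by omega)))
  have fP : f Q = A := by
    refine Stmt9.winner_eq hspec Q A ?_ ?_
    · intro y
      rcases cases3 y with h | h | h
      · rw [h]
      · rw [h, hA1, hB1]; linarith
      · rw [h, hA1, hC1]; linarith
    · intro y _ hy
      unfold prefers
      rw [hQ, hone, hone, Fin.lt_iff_val_lt_val]
      have h2 : (y:ℕ) ≠ m-1 := fun h => hy (Fin.ext (by omega))
      have := y.isLt
      omega
  set i : Fin n := σ z1 with hidef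
  have hPi : Q i = π1.symm := by
    show Qc (σ (σ z1)) = π1.symm
    rw [hσσ1, hQc]
    simp [hz1]
  set P' : Profile n m := update Q i πm.symm with hP'def
  have hupd : ∀ x, score s P' x = score s Q x - s (π1 x) + s (πm x) := by
    intro x
    rw [hP'def, Stmt9.score_update, hPi]
    simp
  have hupA : score s P' A = score s Q A := by
    rw [hupd A, hπ1A, hπmA]; ring
  have hupB : score s P' B = score s Q B - (s A - s B) := by
    rw [hupd B, hπ1B, hπmB]; ring
  have hupC : score s P' C = score s Q C + (s A - s B) := by
    rw [hupd C, hπ1C, hπmC]; ring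
  have fP' : f P' = C := by
    refine Stmt9.winner_eq hspec P' C ?_ ?_
    · intro y
      rcases cases3 y with h | h | h
      · rw [h, hupA, hupC, hA1, hC1]; linarith
      · rw [h, hupB, hupC, hB1, hC1]; linarith
      · rw [h]
    · intro y hy hyC'
      exfalso
      rcases cases3 y with h | h | h
      · rw [h, hupA] at hy; rw [hupC, hA1, hC1] at hy; linarith
      · rw [h, hupB] at hy; rw [hupC, hB1, hC1] at hy; linarith
      · exact hyC' h
  have hbot : (((Q i).symm (f Q)) : ℕ) = 0 := by
    rw [fP, hPi]
    simp only [Equiv.symm_symm]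
    rw [hπ1A, hCv]
    omega
  have hneq : f (update Q i πm.symm) ≠ f Q := by
    rw [← hP'def, fP', fP]
    exact Ne.symm hAC
  exact Stmt9.bottom_attack hR i Q πm.symm hbot hneq


end Stmt9

/-- Assume n > 2 and m ≥ 3. No N-scoring rule whose scores satisfy
s_{m−1} < s_m (i.e. k* = m − 1) is regret-free truth-telling. -/
theorem stmt_9 (n m : ℕ) (hn : 2 < n) (hm : 3 ≤ m) (s : Fin m → ℝ)
    (hmono : Monotone s)
    (h1m : s ⟨0, by omega⟩ < s ⟨m - 1, by omega⟩)
    (hlast : s ⟨m - 2, by omega⟩ < s ⟨m - 1, by omega⟩)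
    (f : Profile n m → Fin m) (hf : NScoring s f) :
    ¬ RFTT f := by
  classical
  obtain ⟨i₀, hspec⟩ := hf
  intro hR
  obtain ⟨A, hAv⟩ : ∃ A : Fin m, (A:ℕ) = m-1 := ⟨⟨m-1, by omega⟩, rfl⟩
  obtain ⟨B, hBv⟩ : ∃ B : Fin m, (B:ℕ) = m-2 := ⟨⟨m-2, by omega⟩, rfl⟩
  obtain ⟨C, hCv⟩ : ∃ C : Fin m, (C:ℕ) = m-3 := ⟨⟨m-3, by omega⟩, rfl⟩
  obtain ⟨Z, hZv⟩ : ∃ Z : Fin m, (Z:ℕ) = 0 := ⟨⟨0, by omega⟩, rfl⟩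
  have hsZA : s Z < s A := by
    have e1 : Z = ⟨0, by omega⟩ := Fin.ext (by simpa using hZv)
    have e2 : A = ⟨m-1, by omega⟩ := Fin.ext (by simpa using hAv)
    rw [e1, e2]; exact h1m
  have hsBA : s B < s A := by
    have e1 : B = ⟨m-2, by omega⟩ := Fin.ext (by simpa using hBv)
    have e2 : A = ⟨m-1, by omega⟩ := Fin.ext (by simpa using hAv)
    rw [e1, e2]; exact hlast
  have hZB : s Z ≤ s B := hmono (show (Z:ℕ) ≤ (B:ℕ) by omega)
  by_cases hpar : n % 2 = 0
  · exact Stmt9.branchA hn hm s hmono hspec hR A B C Z hAv hBv hCv hZv hsZA hsBA hpar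
  · have hparO : n % 2 = 1 := by omega
    by_cases hG : s B = s Z
    · exact Stmt9.branchB hn hm s hmono hspec hR A B C Z hAv hBv hCv hZv hsZA hsBA hparO hG
    · have hGlt : s Z < s B := lt_of_le_of_ne hZB (fun h => hG h.symm)
      by_cases hm3 : m = 3
      · by_cases hn3 : n = 3
        · exact Stmt9.branchE hn hm s hmono hspec hR A B C Z hAv hBv hCv hZv hsZA hsBA hn3 hm3
        · exact Stmt9.branchD hn hm s hmono hspec hR A B C Z hAv hBv hCv hZv hsZA hsBA
            hparO hGlt hm3 hn3
      · exact Stmt9.branchC hn hm s hmono hspec hR A B C Z hAv hBv hCv hZv hsZA hsBA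
          hparO hGlt hm3
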